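/- A function r from intervals of Q to nonnegative integers is a quiver rank array (i.e., realized by some representation) if and only if for every interval J with at least one arrow, the quantity (-1)^{#J}( r(J_L) + r(J_R) - r(J_L ∩ J_R) - r(J_L ∪ J_R) ) is a nonnegative integer, where J_L, J_R are the leftward and rightward shifts of J truncated to Q. -/

import Mathlib

/-- `⌈x/2⌉` for a nonnegative integer `x`. -/
def ceilHalf (x : ℤ) : ℤ := (x + 1) / 2

/-- The number of arrows in the intersection of the intervals `[p,q]` and `[a',b']`. -/
def interCount (p q a' b' : ℤ) : ℤ := max 0 (min q b' + 1 - max p a')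

/-- The lace-to-rank formula: the rank function of the representation
`⊕_{J'} s_{J'} I_{J'}` of the bipartite type `A` quiver with arrows `0,…,m-1`. -/
noncomputable def laceToRank (m : ℤ) (s : ℤ → ℤ → ℕ) (p q : ℤ) : ℤ :=
  ∑ a' ∈ Finset.Icc 0 (m - 1), ∑ b' ∈ Finset.Icc a' (m - 1),
    (s a' b' : ℤ) * ceilHalf (interCount p q a' b')

/-- rank of interval module `I_{[a',b']}` on interval `[p,q]`. -/
def QRAg (a' b' p q : ℤ) : ℤ := ceilHalf (interCount p q a' b')

lemma QRAg_trunc (m a' b' p q : ℤ) (h1 : 0 ≤ a') (h2 : b' ≤ m - 1) :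
    QRAg a' b' p q = QRAg a' b' (max 0 p) (min (m - 1) q) := by
  simp only [QRAg, ceilHalf, interCount]; omega

lemma QRAg_empty (a' b' p q : ℤ) (h : q < p) : QRAg a' b' p q = 0 := by
  simp only [QRAg, ceilHalf, interCount]; omega

lemma QRAkey (a b a' b' : ℤ) (hab : a ≤ b) (ha' : 0 ≤ a') (hab' : a' ≤ b') :
    (-1 : ℤ) ^ ((b - a + 1).toNat) *
      (QRAg a' b' (a-1) (b-1) + QRAg a' b' (a+1) (b+1)
        - QRAg a' b' (a+1) (b-1) - QRAg a' b' (a-1) (b+1))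
      = if a = a' ∧ b = b' then 1 else 0 := by
  rcases Nat.even_or_odd ((b - a + 1).toNat) with h | h
  · rw [Even.neg_one_pow h]
    rw [Nat.even_iff] at h
    simp only [QRAg, ceilHalf, interCount]
    split <;> omega
  · rw [Odd.neg_one_pow h]
    rw [Nat.odd_iff] at h
    simp only [QRAg, ceilHalf, interCount]
    split <;> omega

lemma QRAsum_fin (m : ℤ) (F : ℤ → ℤ) :
    ∑ i : Fin m.toNat, F (i.val : ℤ) = ∑ a ∈ Finset.Icc (0:ℤ) (m-1), F a := by
  rw [Fin.sum_univ_eq_sum_range (fun n => F (n:ℤ)) m.toNat]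
  have h : Finset.Icc (0:ℤ) (m-1) =
      (Finset.range m.toNat).map ⟨fun n : ℕ => (n:ℤ), fun a b h => by simpa using h⟩ := by
    ext a
    simp only [Finset.mem_Icc, Finset.mem_map, Finset.mem_range, Function.Embedding.coeFn_mk]
    constructor
    · intro ha; exact ⟨a.toNat, by omega, by show ((a.toNat : ℕ) : ℤ) = a; omega⟩
    · rintro ⟨n, h1, rfl⟩; show 0 ≤ (n:ℤ) ∧ (n:ℤ) ≤ m - 1; omega
  rw [h, Finset.sum_map]
  rfl

lemma QRAsum_pairs (m : ℤ) (F : ℤ → ℤ → ℤ) :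
    ∑ z : Fin m.toNat × Fin m.toNat,
        (if (z.1.val : ℤ) ≤ (z.2.val : ℤ) then F (z.1.val : ℤ) (z.2.val : ℤ) else 0)
      = ∑ a ∈ Finset.Icc (0:ℤ) (m-1), ∑ b ∈ Finset.Icc a (m-1), F a b := by
  rw [Fintype.sum_prod_type]
  rw [show (∑ i : Fin m.toNat, ∑ j : Fin m.toNat,
      (if (i.val : ℤ) ≤ (j.val : ℤ) then F (i.val : ℤ) (j.val : ℤ) else 0))
    = ∑ i : Fin m.toNat, ∑ b ∈ Finset.Icc ((i.val : ℤ)) (m-1), F (i.val : ℤ) b from ?_]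
  · exact QRAsum_fin m (fun a => ∑ b ∈ Finset.Icc a (m-1), F a b)
  · apply Finset.sum_congr rfl
    intro i _
    rw [QRAsum_fin m (fun b => if (i.val : ℤ) ≤ b then F (i.val : ℤ) b else 0)]
    rw [← Finset.sum_filter]
    congr 1
    ext b
    simp only [Finset.mem_filter, Finset.mem_Icc]
    have := i.isLt
    omega

/-- indicator that the truncation of `[p,q]` to `[0,m-1]` is the interval of `y`. -/
def QRAc (m p q : ℤ) (y : Fin m.toNat × Fin m.toNat) : ℤ :=
  if (y.1.val : ℤ) = max 0 p ∧ (y.2.val : ℤ) = min (m-1) q then 1 else 0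

lemma QRAc_sum (m : ℤ) (hm : 1 ≤ m) (f : ℤ → ℤ → ℤ)
    (htrunc : ∀ p q : ℤ, f p q = f (max 0 p) (min (m - 1) q))
    (hempty : ∀ p q : ℤ, q < p → f p q = 0) (p q : ℤ) :
    ∑ y : Fin m.toNat × Fin m.toNat, QRAc m p q y * f (y.1.val : ℤ) (y.2.val : ℤ)
      = f p q := by
  by_cases h : max 0 p < m ∧ 0 ≤ min (m-1) q
  · have h1 : (max 0 p).toNat < m.toNat := by omega
    have h2 : (min (m-1) q).toNat < m.toNat := by omega
    set y0 : Fin m.toNat × Fin m.toNat := (⟨(max 0 p).toNat, h1⟩, ⟨(min (m-1) q).toNat, h2⟩)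
    rw [Finset.sum_eq_single_of_mem y0 (Finset.mem_univ _)]
    · have e1 : (y0.1.val : ℤ) = max 0 p := by simp only [y0]; omega
      have e2 : (y0.2.val : ℤ) = min (m-1) q := by simp only [y0]; omega
      rw [QRAc, if_pos ⟨e1, e2⟩, one_mul, e1, e2, ← htrunc]
    · intro y _ hy
      rw [QRAc, if_neg, zero_mul]
      rintro ⟨e1, e2⟩
      apply hy
      have : y.1 = y0.1 := by apply Fin.ext; simp only [y0]; omega
      have : y.2 = y0.2 := by apply Fin.ext; simp only [y0]; omega
      exact Prod.ext ‹y.1 = y0.1› ‹y.2 = y0.2›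
  · have hz : ∀ y : Fin m.toNat × Fin m.toNat,
        QRAc m p q y * f (y.1.val : ℤ) (y.2.val : ℤ) = 0 := by
      intro y
      rw [QRAc, if_neg, zero_mul]
      rintro ⟨e1, e2⟩
      have := y.1.isLt
      have := y.2.isLt
      omega
    rw [Finset.sum_congr rfl (fun y _ => hz y), Finset.sum_const, smul_zero]
    rw [htrunc p q, hempty _ _ (by omega)]

def QRAmatA (m : ℤ) : Matrix (Fin m.toNat × Fin m.toNat) (Fin m.toNat × Fin m.toNat) ℤ :=
  fun x y => if (x.1.val : ℤ) ≤ (x.2.val : ℤ) ∧ (y.1.val : ℤ) ≤ (y.2.val : ℤ) then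
      QRAg (y.1.val : ℤ) (y.2.val : ℤ) (x.1.val : ℤ) (x.2.val : ℤ)
    else if x = y then 1 else 0

def QRAmatB (m : ℤ) : Matrix (Fin m.toNat × Fin m.toNat) (Fin m.toNat × Fin m.toNat) ℤ :=
  fun x y => if (x.1.val : ℤ) ≤ (x.2.val : ℤ) ∧ (y.1.val : ℤ) ≤ (y.2.val : ℤ) then
      (-1) ^ (((x.2.val : ℤ) - (x.1.val : ℤ) + 1).toNat) *
        (QRAc m ((x.1.val : ℤ)-1) ((x.2.val : ℤ)-1) y + QRAc m ((x.1.val : ℤ)+1) ((x.2.val : ℤ)+1) y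
          - QRAc m ((x.1.val : ℤ)+1) ((x.2.val : ℤ)-1) y - QRAc m ((x.1.val : ℤ)-1) ((x.2.val : ℤ)+1) y)
    else if x = y then 1 else 0

lemma QRAmatB_row (m : ℤ) (hm : 1 ≤ m) (f : ℤ → ℤ → ℤ)
    (htrunc : ∀ p q : ℤ, f p q = f (max 0 p) (min (m - 1) q))
    (hempty : ∀ p q : ℤ, q < p → f p q = 0)
    (x : Fin m.toNat × Fin m.toNat) (hx : (x.1.val : ℤ) ≤ (x.2.val : ℤ)) :
    ∑ y : Fin m.toNat × Fin m.toNat, QRAmatB m x y * f (y.1.val : ℤ) (y.2.val : ℤ)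
      = (-1) ^ (((x.2.val : ℤ) - (x.1.val : ℤ) + 1).toNat) *
          (f ((x.1.val : ℤ)-1) ((x.2.val : ℤ)-1) + f ((x.1.val : ℤ)+1) ((x.2.val : ℤ)+1)
            - f ((x.1.val : ℤ)+1) ((x.2.val : ℤ)-1) - f ((x.1.val : ℤ)-1) ((x.2.val : ℤ)+1)) := by
  have step : ∀ y : Fin m.toNat × Fin m.toNat,
      QRAmatB m x y * f (y.1.val : ℤ) (y.2.val : ℤ)
        = ((-1) ^ (((x.2.val : ℤ) - (x.1.val : ℤ) + 1).toNat) *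
            (QRAc m ((x.1.val : ℤ)-1) ((x.2.val : ℤ)-1) y + QRAc m ((x.1.val : ℤ)+1) ((x.2.val : ℤ)+1) y
              - QRAc m ((x.1.val : ℤ)+1) ((x.2.val : ℤ)-1) y - QRAc m ((x.1.val : ℤ)-1) ((x.2.val : ℤ)+1) y))
          * f (y.1.val : ℤ) (y.2.val : ℤ) := by
    intro y
    by_cases hy : (y.1.val : ℤ) ≤ (y.2.val : ℤ)
    · rw [QRAmatB, if_pos ⟨hx, hy⟩]
    · have hf : f (y.1.val : ℤ) (y.2.val : ℤ) = 0 := hempty _ _ (by omega)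
      rw [hf, mul_zero, mul_zero]
  rw [Finset.sum_congr rfl (fun y _ => step y)]
  simp only [mul_assoc, ← Finset.mul_sum]
  congr 1
  simp only [add_mul, sub_mul, Finset.sum_add_distrib, Finset.sum_sub_distrib]
  rw [QRAc_sum m hm f htrunc hempty, QRAc_sum m hm f htrunc hempty,
    QRAc_sum m hm f htrunc hempty, QRAc_sum m hm f htrunc hempty]

lemma QRA_BA (m : ℤ) (hm : 1 ≤ m) : QRAmatB m * QRAmatA m = 1 := by
  ext x y
  rw [Matrix.mul_apply, Matrix.one_apply]
  by_cases hx : (x.1.val : ℤ) ≤ (x.2.val : ℤ)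
  · by_cases hy : (y.1.val : ℤ) ≤ (y.2.val : ℤ)
    · have step : ∀ z : Fin m.toNat × Fin m.toNat,
          QRAmatB m x z * QRAmatA m z y
            = QRAmatB m x z * QRAg (y.1.val : ℤ) (y.2.val : ℤ) (z.1.val : ℤ) (z.2.val : ℤ) := by
        intro z
        by_cases hz : (z.1.val : ℤ) ≤ (z.2.val : ℤ)
        · rw [QRAmatA, if_pos ⟨hz, hy⟩]
        · have hB : QRAmatB m x z = 0 := by
            rw [QRAmatB, if_neg (by tauto), if_neg (by rintro rfl; exact hz hx)]
          rw [hB, zero_mul, zero_mul]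
      rw [Finset.sum_congr rfl (fun z _ => step z)]
      rw [QRAmatB_row m hm (fun p q => QRAg (y.1.val : ℤ) (y.2.val : ℤ) p q)
        (fun p q => QRAg_trunc m _ _ p q (by positivity) (by have := y.2.isLt; omega))
        (fun p q h => QRAg_empty _ _ _ _ h) x hx]
      rw [QRAkey _ _ _ _ hx (by positivity) hy]
      split_ifs with h1 h2 h2
      · rfl
      · exact absurd (Prod.ext (Fin.ext (by exact_mod_cast h1.1)) (Fin.ext (by exact_mod_cast h1.2))) h2
      · exact absurd ⟨by rw [h2], by rw [h2]⟩ h1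
      · rfl
    · have hxy : x ≠ y := by rintro rfl; exact hy hx
      rw [if_neg hxy]
      apply Finset.sum_eq_zero
      intro z _
      by_cases hz : (z.1.val : ℤ) ≤ (z.2.val : ℤ)
      · rw [QRAmatA, if_neg (by tauto), if_neg (by rintro rfl; exact hy hz), mul_zero]
      · have hB : QRAmatB m x z = 0 := by
          rw [QRAmatB, if_neg (by tauto), if_neg (by rintro rfl; exact hz hx)]
        rw [hB, zero_mul]
  · have stepB : ∀ z : Fin m.toNat × Fin m.toNat,
        QRAmatB m x z = if x = z then 1 else 0 := by
      intro z; rw [QRAmatB, if_neg (by tauto)]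
    rw [Finset.sum_congr rfl (fun z _ => by rw [stepB z])]
    simp only [ite_mul, one_mul, zero_mul]
    rw [Finset.sum_ite_eq, if_pos (Finset.mem_univ x)]
    rw [QRAmatA, if_neg (by tauto)]

lemma QRA_AB (m : ℤ) (hm : 1 ≤ m) : QRAmatA m * QRAmatB m = 1 := by
  rw [mul_eq_one_comm]
  exact QRA_BA m hm

lemma laceToRank_eq (m : ℤ) (s : ℤ → ℤ → ℕ) (p q : ℤ) :
    laceToRank m s p q = ∑ a' ∈ Finset.Icc 0 (m-1), ∑ b' ∈ Finset.Icc a' (m-1),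
      (s a' b' : ℤ) * QRAg a' b' p q := rfl

lemma laceToRank_trunc (m : ℤ) (s : ℤ → ℤ → ℕ) (p q : ℤ) :
    laceToRank m s p q = laceToRank m s (max 0 p) (min (m-1) q) := by
  rw [laceToRank_eq, laceToRank_eq]
  apply Finset.sum_congr rfl
  intro a' ha'
  apply Finset.sum_congr rfl
  intro b' hb'
  rw [Finset.mem_Icc] at ha' hb'
  rw [QRAg_trunc m a' b' p q ha'.1 hb'.2]

lemma laceToRank_empty (m : ℤ) (s : ℤ → ℤ → ℕ) (p q : ℤ) (h : q < p) :
    laceToRank m s p q = 0 := by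
  rw [laceToRank_eq]
  apply Finset.sum_eq_zero
  intro a' _
  apply Finset.sum_eq_zero
  intro b' _
  rw [QRAg_empty a' b' p q h, mul_zero]

theorem stmt3' (m : ℤ) (hm : 1 ≤ m) (r : ℤ → ℤ → ℤ)
    (htrunc : ∀ p q : ℤ, r p q = r (max 0 p) (min (m - 1) q))
    (hempty : ∀ p q : ℤ, q < p → r p q = 0) :
    (∃ s : ℤ → ℤ → ℕ,
        (∀ a b : ℤ, s a b ≠ 0 → 0 ≤ a ∧ a ≤ b ∧ b ≤ m - 1) ∧
        ∀ p q : ℤ, r p q = laceToRank m s p q)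
      ↔ ∀ a b : ℤ, 0 ≤ a → a ≤ b → b ≤ m - 1 →
          0 ≤ (-1) ^ ((b - a + 1).toNat) *
            (r (a - 1) (b - 1) + r (a + 1) (b + 1)
              - r (a + 1) (b - 1) - r (a - 1) (b + 1)) := by
  constructor
  · rintro ⟨s, hsupp, hrs⟩ a b ha hab hb
    have hmem_a : a ∈ Finset.Icc (0:ℤ) (m-1) := Finset.mem_Icc.mpr ⟨ha, by omega⟩
    have hmem_b : b ∈ Finset.Icc a (m-1) := Finset.mem_Icc.mpr ⟨hab, hb⟩
    have key : (-1 : ℤ) ^ ((b - a + 1).toNat) *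
        (r (a - 1) (b - 1) + r (a + 1) (b + 1)
          - r (a + 1) (b - 1) - r (a - 1) (b + 1)) = (s a b : ℤ) := by
      calc (-1 : ℤ) ^ ((b - a + 1).toNat) *
            (r (a - 1) (b - 1) + r (a + 1) (b + 1)
              - r (a + 1) (b - 1) - r (a - 1) (b + 1))
          = ∑ a' ∈ Finset.Icc (0:ℤ) (m-1), ∑ b' ∈ Finset.Icc a' (m-1),
              (s a' b' : ℤ) * (if a = a' ∧ b = b' then 1 else 0) := by
            rw [hrs, hrs, hrs, hrs, laceToRank_eq, laceToRank_eq, laceToRank_eq, laceToRank_eq,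
              ← Finset.sum_add_distrib, ← Finset.sum_sub_distrib, ← Finset.sum_sub_distrib,
              Finset.mul_sum]
            apply Finset.sum_congr rfl
            intro a' ha'
            rw [← Finset.sum_add_distrib, ← Finset.sum_sub_distrib, ← Finset.sum_sub_distrib,
              Finset.mul_sum]
            apply Finset.sum_congr rfl
            intro b' hb'
            rw [Finset.mem_Icc] at ha' hb'
            rw [← QRAkey a b a' b' hab ha'.1 hb'.1]
            ring
        _ = ∑ a' ∈ Finset.Icc (0:ℤ) (m-1),
              (if a = a' then (∑ b' ∈ Finset.Icc a' (m-1),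
                if b = b' then (s a' b' : ℤ) else 0) else 0) := by
            apply Finset.sum_congr rfl
            intro a' _
            by_cases h1 : a = a'
            · simp [h1, mul_ite]
            · simp [h1]
        _ = (s a b : ℤ) := by
            rw [Finset.sum_ite_eq, if_pos hmem_a, Finset.sum_ite_eq, if_pos hmem_b]
    rw [key]
    positivity
  · intro h
    set sInt : ℤ → ℤ → ℤ := fun a b =>
      if 0 ≤ a ∧ a ≤ b ∧ b ≤ m - 1 then
        (-1) ^ ((b - a + 1).toNat) *
          (r (a - 1) (b - 1) + r (a + 1) (b + 1)
            - r (a + 1) (b - 1) - r (a - 1) (b + 1))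
      else 0 with hsInt
    refine ⟨fun a b => (sInt a b).toNat, ?_, ?_⟩
    · intro a b hs
      by_cases hc : 0 ≤ a ∧ a ≤ b ∧ b ≤ m - 1
      · exact hc
      · exfalso; apply hs; rw [hsInt]; simp only [if_neg hc, Int.toNat_zero]
    · have hcast : ∀ a b : ℤ, 0 ≤ a → a ≤ b → b ≤ m - 1 →
          ((((sInt a b).toNat : ℕ)) : ℤ) = (-1) ^ ((b - a + 1).toNat) *
            (r (a - 1) (b - 1) + r (a + 1) (b + 1)
              - r (a + 1) (b - 1) - r (a - 1) (b + 1)) := by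
        intro a b ha hab hb
        simp only [hsInt]
        rw [if_pos (show 0 ≤ a ∧ a ≤ b ∧ b ≤ m - 1 from ⟨ha, hab, hb⟩)]
        exact Int.toNat_of_nonneg (h a b ha hab hb)
      have goal2 : ∀ p q : ℤ, 0 ≤ p → p ≤ q → q ≤ m - 1 →
          r p q = laceToRank m (fun a b => (sInt a b).toNat) p q := by
        intro p q hp hpq hq
        have hp1 : p.toNat < m.toNat := by omega
        have hq1 : q.toNat < m.toNat := by omega
        set x : Fin m.toNat × Fin m.toNat := (⟨p.toNat, hp1⟩, ⟨q.toNat, hq1⟩) with hxdef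
        have ex1 : (x.1.val : ℤ) = p := by simp only [hxdef]; omega
        have ex2 : (x.2.val : ℤ) = q := by simp only [hxdef]; omega
        have hxv : (x.1.val : ℤ) ≤ (x.2.val : ℤ) := by omega
        have hw : ∀ z : Fin m.toNat × Fin m.toNat, (z.1.val : ℤ) ≤ (z.2.val : ℤ) →
            (∑ y : Fin m.toNat × Fin m.toNat, QRAmatB m z y * r (y.1.val : ℤ) (y.2.val : ℤ))
              = (((sInt (z.1.val : ℤ) (z.2.val : ℤ)).toNat : ℕ) : ℤ) := by
          intro z hz
          rw [QRAmatB_row m hm r htrunc hempty z hz]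
          rw [hcast _ _ (by positivity) hz (by have := z.2.isLt; omega)]
        calc r p q
            = ∑ y : Fin m.toNat × Fin m.toNat,
                (1 : Matrix (Fin m.toNat × Fin m.toNat) (Fin m.toNat × Fin m.toNat) ℤ) x y
                  * r (y.1.val : ℤ) (y.2.val : ℤ) := by
              simp only [Matrix.one_apply, ite_mul, one_mul, zero_mul]
              rw [Finset.sum_ite_eq, if_pos (Finset.mem_univ x), ex1, ex2]
          _ = ∑ y : Fin m.toNat × Fin m.toNat,
                (∑ z : Fin m.toNat × Fin m.toNat, QRAmatA m x z * QRAmatB m z y)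
                  * r (y.1.val : ℤ) (y.2.val : ℤ) := by
              rw [← QRA_AB m hm]
              simp only [Matrix.mul_apply]
          _ = ∑ z : Fin m.toNat × Fin m.toNat, QRAmatA m x z *
                (∑ y : Fin m.toNat × Fin m.toNat, QRAmatB m z y * r (y.1.val : ℤ) (y.2.val : ℤ)) := by
              simp only [Finset.sum_mul]
              rw [Finset.sum_comm]
              simp only [Finset.mul_sum, mul_assoc]
          _ = ∑ z : Fin m.toNat × Fin m.toNat,
                (if (z.1.val : ℤ) ≤ (z.2.val : ℤ) then
                  ((((sInt (z.1.val : ℤ) (z.2.val : ℤ)).toNat : ℕ)) : ℤ)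
                    * QRAg (z.1.val : ℤ) (z.2.val : ℤ) p q else 0) := by
              apply Finset.sum_congr rfl
              intro z _
              by_cases hz : (z.1.val : ℤ) ≤ (z.2.val : ℤ)
              · rw [if_pos hz, QRAmatA, if_pos ⟨hxv, hz⟩, hw z hz, ex1, ex2, mul_comm]
              · rw [if_neg hz, QRAmatA, if_neg (by tauto),
                  if_neg (by rintro rfl; exact hz hxv), zero_mul]
          _ = ∑ a' ∈ Finset.Icc (0:ℤ) (m-1), ∑ b' ∈ Finset.Icc a' (m-1),
                (((sInt a' b').toNat : ℕ) : ℤ) * QRAg a' b' p q :=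
              QRAsum_pairs m (fun a' b' => (((sInt a' b').toNat : ℕ) : ℤ) * QRAg a' b' p q)
          _ = laceToRank m (fun a b => (sInt a b).toNat) p q := rfl
      intro p q
      rw [htrunc p q, laceToRank_trunc]
      by_cases he : min (m-1) q < max 0 p
      · rw [hempty _ _ he, laceToRank_empty _ _ _ _ he]
      · exact goal2 _ _ (le_max_left 0 p) (by omega) (min_le_left (m-1) q)


/-- a function `r` on intervals of the bipartite type `A` quiver `Q` with
arrows `0,…,m-1` (extended to all integer intervals by truncation – equivalently by
working with a longer quiver with zero dimension vector at the new vertices – and by `0`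
on empty intervals) is a quiver rank array, i.e. is realized by a representation
`⊕ s_{J'} I_{J'}` of `Q` with multiplicities `s_{J'} ∈ ℤ_{≥0}`, if and only if for every
interval `J = [a,b] ⊆ Q` with at least one arrow the quantity
`(-1)^{#J}( r(J_L) + r(J_R) - r(J_L ∩ J_R) - r(J_L ∪ J_R) )` is nonnegative. -/
theorem stmt3 (m : ℤ) (hm : 1 ≤ m) (r : ℤ → ℤ → ℤ)
    (htrunc : ∀ p q : ℤ, r p q = r (max 0 p) (min (m - 1) q))
    (hempty : ∀ p q : ℤ, q < p → r p q = 0) :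
    (∃ s : ℤ → ℤ → ℕ,
        (∀ a b : ℤ, s a b ≠ 0 → 0 ≤ a ∧ a ≤ b ∧ b ≤ m - 1) ∧
        ∀ p q : ℤ, r p q = laceToRank m s p q)
      ↔ ∀ a b : ℤ, 0 ≤ a → a ≤ b → b ≤ m - 1 →
          0 ≤ (-1) ^ ((b - a + 1).toNat) *
            (r (a - 1) (b - 1) + r (a + 1) (b + 1)
              - r (a + 1) (b - 1) - r (a - 1) (b + 1)) := by
  exact stmt3' m hm r htrunc hempty
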